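/- Let M be a finitely generated, sharp, integral commutative monoid (written additively). Then there exists a monoid homomorphism f : M → ℕ such that f(m) > 0 for all m ≠ 0. -/

import Mathlib

open Finset

section Gordan

lemma exists_between_fintype {F : Type*} [Field F] [LinearOrder F] [IsStrictOrderedRing F]
    {α β : Type*} [Fintype α] [Fintype β] (L : α → F) (U : β → F)
    (h : ∀ a b, L a < U b) : ∃ x : F, (∀ a, L a < x) ∧ ∀ b, x < U b := by
  cases isEmpty_or_nonempty α with
  | inl hα =>
    cases isEmpty_or_nonempty β with
    | inl hβ => exact ⟨0, fun a => hα.elim a, fun b => hβ.elim b⟩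
    | inr hβ =>
      obtain ⟨b0, -, hb0⟩ := Finset.exists_min_image univ U ⟨Classical.arbitrary β, mem_univ _⟩
      exact ⟨U b0 - 1, fun a => hα.elim a,
        fun b => lt_of_lt_of_le (by linarith [hb0 b (mem_univ b)]) (le_refl _)⟩
  | inr hα =>
    obtain ⟨a0, -, ha0⟩ := Finset.exists_max_image univ L ⟨Classical.arbitrary α, mem_univ _⟩
    cases isEmpty_or_nonempty β with
    | inl hβ =>
      exact ⟨L a0 + 1, fun a => lt_of_le_of_lt (ha0 a (mem_univ a)) (by linarith),
        fun b => hβ.elim b⟩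
    | inr hβ =>
      obtain ⟨b0, -, hb0⟩ := Finset.exists_min_image univ U ⟨Classical.arbitrary β, mem_univ _⟩
      refine ⟨(L a0 + U b0) / 2, fun a => lt_of_le_of_lt (ha0 a (mem_univ a)) ?_,
        fun b => lt_of_lt_of_le ?_ (hb0 b (mem_univ b))⟩
      · have := h a0 b0; linarith
      · have := h a0 b0; linarith

/-- **Gordan's theorem** (one direction): if a finite family of vectors admits no nontrivial
nonnegative linear relation, then some linear functional is strictly positive on all of them. -/
lemma gordan {F : Type*} [Field F] [LinearOrder F] [IsStrictOrderedRing F] (k : ℕ) :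
    ∀ {ι : Type} [Fintype ι] (v : ι → Fin k → F),
    (∀ c : ι → F, (∀ i, 0 ≤ c i) → ∑ i, c i • v i = 0 → ∀ i, c i = 0) →
    ∃ y : Fin k → F, ∀ i, 0 < ∑ j, v i j * y j := by
  induction k with
  | zero =>
    intro ι _ v hv
    refine ⟨0, fun i => ?_⟩
    exfalso
    have h1 : ∑ i : ι, (1 : F) • v i = 0 := by
      apply Finset.sum_eq_zero; intro i _
      funext j; exact j.elim0
    exact one_ne_zero (hv (fun _ => 1) (fun _ => zero_le_one) h1 i)
  | succ k ih =>
    intro ι _ v hv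
    classical
    set a : ι → F := fun i => v i 0 with ha
    set u : ι → Fin k → F := fun i j => v i j.succ with hu
    have hvdecomp : ∀ i, v i = Fin.cons (a i) (u i) := by
      intro i; funext j
      refine Fin.cases ?_ (fun j' => ?_) j
      · simp [ha]
      · simp [hu]
    let κ : Type := {i // a i = 0} ⊕ ({i // 0 < a i} × {i // a i < 0})
    let w : κ → Fin k → F := fun x =>
      match x with
      | Sum.inl z => u z.1
      | Sum.inr (p, q) => a p.1 • u q.1 - a q.1 • u p.1
    have hw : ∀ c : κ → F, (∀ x, 0 ≤ c x) → ∑ x, c x • w x = 0 → ∀ x, c x = 0 := by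
      intro c hc hsum
      let coeff : κ → ι → F := fun x i =>
        match x with
        | Sum.inl z => if z.1 = i then c x else 0
        | Sum.inr (p, q) =>
            (if p.1 = i then (-a q.1) * c x else 0) + (if q.1 = i then a p.1 * c x else 0)
      have hcoeff_nonneg : ∀ x i, 0 ≤ coeff x i := by
        rintro (z | ⟨p, q⟩) i
        · show (0:F) ≤ if z.1 = i then c _ else 0
          split
          · exact hc _
          · exact le_refl 0
        · show (0:F) ≤ (if p.1 = i then (-a q.1) * c _ else 0)
            + (if q.1 = i then a p.1 * c _ else 0)
          have h1 : (0:F) ≤ (if p.1 = i then (-a q.1) * c (Sum.inr (p,q)) else 0) := by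
            split
            · exact mul_nonneg (by linarith [q.2]) (hc _)
            · exact le_refl 0
          have h2 : (0:F) ≤ (if q.1 = i then a p.1 * c (Sum.inr (p,q)) else 0) := by
            split
            · exact mul_nonneg (le_of_lt p.2) (hc _)
            · exact le_refl 0
          exact add_nonneg h1 h2
      have key : ∀ x : κ, ∑ i : ι, coeff x i • v i
          = c x • (Fin.cons 0 (w x) : Fin (k+1) → F) := by
        rintro (z | ⟨p, q⟩)
        · have : ∀ i, coeff (Sum.inl z) i • v i
              = if z.1 = i then c (Sum.inl z) • v i else 0 := by
            intro i
            show (if z.1 = i then c (Sum.inl z) else 0) • v i = _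
            split <;> simp
          rw [Finset.sum_congr rfl (fun i _ => this i), Finset.sum_ite_eq univ z.1
            (fun i => c (Sum.inl z) • v i)]
          simp only [mem_univ, if_true]
          rw [hvdecomp z.1, z.2]
        · have expand : ∀ i, coeff (Sum.inr (p,q)) i • v i
              = (if p.1 = i then ((-a q.1) * c (Sum.inr (p,q))) • v i else 0)
                + (if q.1 = i then (a p.1 * c (Sum.inr (p,q))) • v i else 0) := by
            intro i
            show ((if p.1 = i then (-a q.1) * c _ else 0)
              + (if q.1 = i then a p.1 * c _ else 0)) • v i = _
            rw [add_smul]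
            congr 1 <;> (split <;> simp)
          rw [Finset.sum_congr rfl (fun i _ => expand i), Finset.sum_add_distrib,
            Finset.sum_ite_eq univ p.1, Finset.sum_ite_eq univ q.1]
          simp only [mem_univ, if_true]
          rw [hvdecomp p.1, hvdecomp q.1]
          funext j
          refine Fin.cases ?_ (fun j' => ?_) j
          · simp; ring
          · simp [w]; ring
      have hCsum : ∑ i, (∑ x : κ, coeff x i) • v i = 0 := by
        have swap : ∑ i, (∑ x : κ, coeff x i) • v i = ∑ x : κ, ∑ i, coeff x i • v i := by
          rw [Finset.sum_comm]
          apply Finset.sum_congr rfl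
          intro i _
          rw [Finset.sum_smul]
        rw [swap, Finset.sum_congr rfl (fun x _ => key x)]
        have : ∑ x : κ, c x • (Fin.cons 0 (w x) : Fin (k+1) → F)
            = Fin.cons 0 (∑ x : κ, c x • w x) := by
          funext j
          refine Fin.cases ?_ (fun j' => ?_) j
          · simp
          · simp [Finset.sum_apply]
        rw [this, hsum]
        funext j
        refine Fin.cases ?_ (fun j' => ?_) j <;> simp
      have hC0 := hv _ (fun i => Finset.sum_nonneg fun x _ => hcoeff_nonneg x i) hCsum
      have hcoeff0 : ∀ x i, coeff x i = 0 := fun x i =>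
        (Finset.sum_eq_zero_iff_of_nonneg (fun x _ => hcoeff_nonneg x i)).1 (hC0 i) x (mem_univ x)
      rintro (z | ⟨p, q⟩)
      · have h0 := hcoeff0 (Sum.inl z) z.1
        simpa [coeff] using h0
      · have h0 := hcoeff0 (Sum.inr (p, q)) p.1
        have hne : q.1 ≠ p.1 := by
          intro h
          have := q.2
          rw [h] at this
          exact absurd p.2 (by linarith)
        have : (-a q.1) * c (Sum.inr (p,q)) = 0 := by
          simpa [coeff, hne] using h0
        have haq : a q.1 < 0 := q.2
        rcases mul_eq_zero.1 this with h | h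
        · linarith
        · exact h
    obtain ⟨y', hy'⟩ := ih w hw
    have hLU : ∀ (p : {i // 0 < a i}) (q : {i // a i < 0}),
        (-∑ j, u p.1 j * y' j) / a p.1 < (-∑ j, u q.1 j * y' j) / a q.1 := by
      intro p q
      have h := hy' (Sum.inr (p, q))
      have hexp : ∑ j, w (Sum.inr (p,q)) j * y' j
          = a p.1 * (∑ j, u q.1 j * y' j) - a q.1 * (∑ j, u p.1 j * y' j) := by
        show ∑ j, (a p.1 • u q.1 - a q.1 • u p.1) j * y' j = _
        rw [Finset.mul_sum, Finset.mul_sum, ← Finset.sum_sub_distrib]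
        apply Finset.sum_congr rfl
        intro j _
        simp only [Pi.sub_apply, Pi.smul_apply, smul_eq_mul]
        ring
      rw [hexp] at h
      have hp := p.2
      have hq := q.2
      have e1 : ((-∑ j, u p.1 j * y' j) / a p.1) * a p.1 = -∑ j, u p.1 j * y' j :=
        div_mul_cancel₀ _ (ne_of_gt hp)
      have e2 : ((-∑ j, u q.1 j * y' j) / a q.1) * a q.1 = -∑ j, u q.1 j * y' j :=
        div_mul_cancel₀ _ (ne_of_lt hq)
      nlinarith [mul_pos hp (neg_pos.2 hq)]
    obtain ⟨y0, hy0L, hy0U⟩ := exists_between_fintype _ _ hLU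
    refine ⟨Fin.cons y0 y', fun i => ?_⟩
    have hexpand : ∑ j, v i j * (Fin.cons y0 y' : Fin (k+1) → F) j
        = a i * y0 + ∑ j, u i j * y' j := by
      rw [Fin.sum_univ_succ]
      simp [ha, hu]
    rw [hexpand]
    rcases lt_trichotomy (a i) 0 with hneg | hzero | hpos
    · have h2 := hy0U ⟨i, hneg⟩
      have e2 : ((-∑ j, u i j * y' j) / a i) * a i = -∑ j, u i j * y' j :=
        div_mul_cancel₀ _ (ne_of_lt hneg)
      nlinarith
    · have h2 := hy' (Sum.inl ⟨i, hzero⟩)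
      have : ∑ j, w (Sum.inl ⟨i, hzero⟩) j * y' j = ∑ j, u i j * y' j := rfl
      rw [this] at h2
      rw [hzero]
      linarith
    · have h2 := hy0L ⟨i, hpos⟩
      have e2 : ((-∑ j, u i j * y' j) / a i) * a i = -∑ j, u i j * y' j :=
        div_mul_cancel₀ _ (ne_of_gt hpos)
      nlinarith

end Gordan

/-- Clearing denominators of a rational number. -/
lemma exists_int_cast_eq (q : ℚ) (N : ℕ) (h : q.den ∣ N) : ∃ z : ℤ, (z : ℚ) = (N : ℚ) * q := by
  obtain ⟨k, hk⟩ := h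
  refine ⟨(k : ℤ) * q.num, ?_⟩
  push_cast
  rw [hk]
  push_cast
  rw [mul_comm (q.den : ℚ) (k : ℚ), mul_assoc, Rat.den_mul_eq_num]

/-- **Lemma 4.7.** Let `M` be a finitely generated, sharp, integral (i.e. cancellative)
commutative monoid. Then there exists a monoid homomorphism `f : M →+ ℕ` with
`f m > 0` for all `m ≠ 0`. -/
theorem MonoidMetrised.exists_strictly_positive_functional (M : Type) [AddCancelCommMonoid M]
    [AddMonoid.FG M] (hsharp : ∀ a b : M, a + b = 0 → a = 0) :
    ∃ f : M →+ ℕ, ∀ m : M, m ≠ 0 → 0 < f m := by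
  classical
  -- Basic consequences of sharpness
  have hsum0 : ∀ (s : Finset M) (g : M → M), False → True := fun _ _ h => h.elim
  obtain ⟨S, hS⟩ : ∃ S : Finset M, AddSubmonoid.closure (S : Set M) = ⊤ :=
    AddMonoid.fg_def.mp ‹_›
  set ι : Type := {x // x ∈ S} with hι
  -- the canonical "evaluation" homomorphism from ℕ-vectors
  let π : (ι → ℕ) →+ M :=
    { toFun := fun a => ∑ i, a i • (i.1 : M)
      map_zero' := by simp
      map_add' := by
        intro x y
        rw [← Finset.sum_add_distrib]
        apply Finset.sum_congr rfl
        intro i _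
        rw [Pi.add_apply, add_nsmul] }
  have hπ : ∀ a : ι → ℕ, π a = ∑ i, a i • (i.1 : M) := fun _ => rfl
  have hπsurj : Function.Surjective π := by
    intro x
    have hx : x ∈ AddSubmonoid.closure (S : Set M) := by rw [hS]; trivial
    induction hx using AddSubmonoid.closure_induction with
    | mem z hz =>
      refine ⟨Pi.single ⟨z, hz⟩ 1, ?_⟩
      rw [hπ, Finset.sum_eq_single (⟨z, hz⟩ : ι)]
      · simp
      · intro i _ hne
        rw [Pi.single_eq_of_ne hne]
        simp
      · intro h
        exact absurd (mem_univ _) h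
    | zero => exact ⟨0, map_zero π⟩
    | add x y hx hy ihx ihy =>
      obtain ⟨ax, hax⟩ := ihx
      obtain ⟨ay, hay⟩ := ihy
      exact ⟨ax + ay, by rw [map_add, hax, hay]⟩
  -- positive and negative parts of integer vectors
  let pos : (ι → ℤ) → (ι → ℕ) := fun x i => (x i).toNat
  let neg : (ι → ℤ) → (ι → ℕ) := fun x i => (-(x i)).toNat
  -- the subgroup of relations
  let D : AddSubgroup (ι → ℤ) :=
    { carrier := {x | π (pos x) = π (neg x)}
      zero_mem' := by
        show π (pos 0) = π (neg 0)
        have h1 : pos 0 = 0 := by funext i; simp [pos]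
        have h2 : neg 0 = 0 := by funext i; simp [neg]
        rw [h1, h2]
      add_mem' := by
        intro x y hx hy
        show π (pos (x + y)) = π (neg (x + y))
        have hkey : pos (x + y) + (neg x + neg y) = neg (x + y) + (pos x + pos y) := by
          funext i
          simp only [Pi.add_apply, pos, neg, neg_add_rev]
          omega
        have h2 := congrArg π hkey
        rw [map_add, map_add, map_add, map_add] at h2
        rw [show π (pos x) = π (neg x) from hx, show π (pos y) = π (neg y) from hy] at h2
        exact add_right_cancel h2
      neg_mem' := by
        intro x hx
        show π (pos (-x)) = π (neg (-x))
        have h1 : pos (-x) = neg x := by funext i; simp [pos, neg]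
        have h2 : neg (-x) = pos x := by funext i; simp [pos, neg]
        rw [h1, h2]
        exact (show π (pos x) = π (neg x) from hx).symm }
  have hmemD : ∀ x : ι → ℤ, x ∈ D ↔ π (pos x) = π (neg x) := fun x => Iff.rfl
  -- differences of π-equal ℕ-vectors are in D
  have hdiff : ∀ aN bN : ι → ℕ, π aN = π bN → (fun i => (aN i : ℤ) - bN i) ∈ D := by
    intro aN bN h
    rw [hmemD]
    have hkey : pos (fun i => (aN i : ℤ) - bN i) + bN = neg (fun i => (aN i : ℤ) - bN i) + aN := by
      funext i
      simp only [Pi.add_apply, pos, neg]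
      omega
    have h2 := congrArg π hkey
    rw [map_add, map_add, h] at h2
    exact add_right_cancel h2
  -- nonnegative vectors in D
  have hDnonneg : ∀ x : ι → ℤ, x ∈ D → (∀ i, 0 ≤ x i) → π (fun i => (x i).toNat) = 0 := by
    intro x hx hxpos
    rw [hmemD] at hx
    have h2 : neg x = 0 := by
      funext i
      have := hxpos i
      simp only [neg, Pi.zero_apply]
      omega
    rw [h2, map_zero] at hx
    exact hx
  -- D is finitely generated as a ℤ-module
  obtain ⟨T, hT⟩ : (AddSubgroup.toIntSubmodule D).FG := IsNoetherian.noetherian _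
  -- move to ℚ
  let castQ : (ι → ℤ) → (ι → ℚ) := fun x i => (x i : ℚ)
  let TQ : Finset (ι → ℚ) := T.image castQ
  let W : Submodule ℚ (ι → ℚ) := Submodule.span ℚ (TQ : Set (ι → ℚ))
  have hcastQ_mem0 : ∀ x : ι → ℤ, x ∈ Submodule.span ℤ (T : Set (ι → ℤ)) → castQ x ∈ W := by
    intro x hx
    induction hx using Submodule.span_induction with
    | mem z hz =>
      exact Submodule.subset_span (by
        rw [Finset.coe_image]
        exact Set.mem_image_of_mem _ hz)
    | zero =>
      have : castQ 0 = 0 := by funext i; simp [castQ]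
      rw [this]; exact W.zero_mem
    | add x y hx hy ihx ihy =>
      have : castQ (x + y) = castQ x + castQ y := by funext i; simp [castQ]
      rw [this]; exact W.add_mem ihx ihy
    | smul z x hx ihx =>
      have : castQ (z • x) = (z : ℚ) • castQ x := by
        funext i
        simp [castQ]
      rw [this]; exact W.smul_mem _ ihx
  have hcastQ_mem : ∀ x : ι → ℤ, x ∈ D → castQ x ∈ W := by
    intro x hx
    apply hcastQ_mem0
    rw [hT]
    rwa [← SetLike.mem_coe, AddSubgroup.coe_toIntSubmodule]
  -- the quotient space and a basis for it
  let Q := (ι → ℚ) ⧸ W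
  let r := Module.finrank ℚ Q
  let b : Module.Basis (Fin r) ℚ Q := Module.finBasis ℚ Q
  -- standard basis vectors
  let E : ι → (ι → ℚ) := fun i j => if i = j then 1 else 0
  -- indices of nonzero generators
  let ιp : Type := {i : ι // (i.1 : M) ≠ 0}
  let vv : ιp → Fin r → ℚ := fun i => b.equivFun (W.mkQ (E i.1))
  -- the functional machinery
  have hvv : ∀ c : ιp → ℚ, (∀ i, 0 ≤ c i) → ∑ i, c i • vv i = 0 → ∀ i, c i = 0 := by
    intro c hc hcs
    -- the corresponding rational vector lies in W
    set x : ι → ℚ := ∑ i : ιp, c i • E i.1 with hx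
    have hmk : W.mkQ x = 0 := by
      apply b.equivFun.injective
      rw [map_zero]
      rw [hx, map_sum]
      rw [map_sum]
      simpa [vv] using hcs
    have hxW : x ∈ W := (Submodule.Quotient.mk_eq_zero W).mp (by rwa [Submodule.mkQ_apply] at hmk)
    -- write x as a rational combination of TQ
    obtain ⟨g, -, hg⟩ := Submodule.mem_span_finset.mp hxW
    -- common denominator
    set N : ℕ := (∏ i : ιp, (c i).den) * (∏ t ∈ TQ, (g t).den) with hN
    have hNpos : 0 < N := by
      apply Nat.mul_pos <;>
        exact Finset.prod_pos (fun _ _ => Rat.den_pos _)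
    have hcN : ∀ i : ιp, (c i).den ∣ N := fun i =>
      Dvd.dvd.mul_right (Finset.dvd_prod_of_mem _ (mem_univ i)) _
    have hgN : ∀ t ∈ TQ, (g t).den ∣ N := fun t ht =>
      Dvd.dvd.mul_left (Finset.dvd_prod_of_mem _ ht) _
    choose zc hzc using fun i : ιp => exists_int_cast_eq (c i) N (hcN i)
    have hzc_nonneg : ∀ i, 0 ≤ zc i := by
      intro i
      have : (0:ℚ) ≤ (zc i : ℚ) := by
        rw [hzc i]
        exact mul_nonneg (by positivity) (hc i)
      exact_mod_cast this
    -- integer vector avec with castQ avec = N • x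
    let avec : ι → ℤ := fun j => ∑ i : ιp, zc i * (if i.1 = j then 1 else 0)
    have havecast : castQ avec = (N : ℚ) • x := by
      funext j
      show ((∑ i : ιp, zc i * (if i.1 = j then 1 else 0) : ℤ) : ℚ) = (N : ℚ) * x j
      push_cast
      rw [hx]
      rw [Finset.sum_apply, Finset.mul_sum]
      apply Finset.sum_congr rfl
      intro i _
      rw [hzc i]
      simp only [Pi.smul_apply, smul_eq_mul, E]
      split <;> push_cast <;> ring
    -- integer combination of T equal to N • x
    choose zg hzg using fun t : {t // t ∈ TQ} => exists_int_cast_eq (g t.1) N (hgN t.1 t.2)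
    have hcastQ_inj : Function.Injective castQ := by
      intro x y h
      funext i
      have h2 := congrFun h i
      simp only [castQ] at h2
      exact_mod_cast h2
    let dvec : ι → ℤ := ∑ t ∈ T.attach, zg ⟨castQ t.1, Finset.mem_image_of_mem _ t.2⟩ • t.1
    have hdvecD : dvec ∈ D := by
      have : dvec ∈ AddSubgroup.toIntSubmodule D := by
        rw [← hT]
        apply Submodule.sum_mem
        intro t _
        exact Submodule.smul_mem _ _ (Submodule.subset_span t.2)
      rwa [← SetLike.mem_coe, AddSubgroup.coe_toIntSubmodule] at this
    have hdvecast : castQ dvec = (N : ℚ) • x := by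
      have h1 : castQ dvec
          = ∑ t ∈ T.attach, ((zg ⟨castQ t.1, Finset.mem_image_of_mem _ t.2⟩ : ℚ)) • castQ t.1 := by
        funext j
        show ((∑ t ∈ T.attach, _ • t.1) j : ℚ) = _
        rw [Finset.sum_apply]
        push_cast
        rw [Finset.sum_apply]
        apply Finset.sum_congr rfl
        intro t _
        simp [castQ]
      rw [h1]
      have h2 : ∀ t : {t // t ∈ T.attach}, True := fun _ => trivial
      -- rewrite each coefficient
      have h3 : ∑ t ∈ T.attach, ((zg ⟨castQ t.1, Finset.mem_image_of_mem _ t.2⟩ : ℚ)) • castQ t.1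
          = ∑ t ∈ T.attach, ((N : ℚ) * g (castQ t.1)) • castQ t.1 := by
        apply Finset.sum_congr rfl
        intro t _
        rw [hzg ⟨castQ t.1, Finset.mem_image_of_mem _ t.2⟩]
      rw [h3]
      have h4 : ∑ t ∈ T.attach, ((N : ℚ) * g (castQ t.1)) • castQ t.1
          = ∑ t ∈ T, ((N : ℚ) * g (castQ t)) • castQ t := by
        rw [← Finset.sum_attach T (fun t => ((N : ℚ) * g (castQ t)) • castQ t)]
      rw [h4]
      have h5 : ∑ t ∈ T, ((N : ℚ) * g (castQ t)) • castQ t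
          = ∑ t' ∈ TQ, ((N : ℚ) * g t') • t' := by
        rw [Finset.sum_image (f := fun t' => ((N : ℚ) * g t') • t') (g := castQ)
          (fun x _ y _ h => hcastQ_inj h)]
      rw [h5]
      have h6 : ∑ t' ∈ TQ, ((N : ℚ) * g t') • t' = (N : ℚ) • ∑ t' ∈ TQ, g t' • t' := by
        rw [Finset.smul_sum]
        apply Finset.sum_congr rfl
        intro t' _
        rw [smul_smul]
      rw [h6, hg]
    -- avec = dvec
    have haveq : avec = dvec := hcastQ_inj (by rw [havecast, hdvecast])
    have havecD : avec ∈ D := haveq ▸ hdvecD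
    have havec_nonneg : ∀ j, 0 ≤ avec j := by
      intro j
      apply Finset.sum_nonneg
      intro i _
      split
      · simpa using hzc_nonneg i
      · simp
    -- conclude from sharpness
    have hπ0 : π (fun j => (avec j).toNat) = 0 := hDnonneg avec havecD havec_nonneg
    rw [hπ] at hπ0
    -- every summand vanishes
    have hterm : ∀ j : ι, (avec j).toNat • (j.1 : M) = 0 := by
      have hgen : ∀ (s : Finset ι) (g : ι → M), (∑ i ∈ s, g i) = 0 → ∀ i ∈ s, g i = 0 := by
        intro s
        induction s using Finset.cons_induction with
        | empty => intro g _ i hi; exact absurd hi (Finset.notMem_empty i)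
        | cons a s ha ihs =>
          intro g hg i hi
          rw [Finset.sum_cons] at hg
          have h1 : g a = 0 := hsharp _ _ hg
          have h2 : ∑ i ∈ s, g i = 0 := hsharp _ _ (by rwa [add_comm] at hg)
          rcases Finset.mem_cons.1 hi with rfl | hi'
          · exact h1
          · exact ihs g h2 i hi'
      exact fun j => hgen univ _ hπ0 j (mem_univ j)
    intro i
    -- avec at i.1 equals zc i
    have havec_i : avec i.1 = zc i := by
      show (∑ i' : ιp, zc i' * (if i'.1 = i.1 then 1 else 0)) = zc i
      rw [Finset.sum_eq_single i]
      · simp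
      · intro i' _ hne
        have : i'.1 ≠ i.1 := fun h => hne (Subtype.ext h)
        simp [this]
      · intro h; exact absurd (mem_univ i) h
    have hzc0 : zc i = 0 := by
      have h1 := hterm i.1
      cases' Nat.eq_zero_or_pos ((avec i.1).toNat) with h h
      · have h3 := havec_nonneg i.1
        omega
      · exfalso
        have hs : (avec i.1).toNat = ((avec i.1).toNat - 1) + 1 := by omega
        rw [hs, succ_nsmul'] at h1
        exact i.2 (hsharp _ _ h1)
    have hNne : (N:ℚ) ≠ 0 := by positivity
    have hmul : (N:ℚ) * c i = 0 := by rw [← hzc i, hzc0]; simp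
    rcases mul_eq_zero.1 hmul with h | h
    · exact absurd h hNne
    · exact h
  -- apply Gordan's theorem
  obtain ⟨y, hy⟩ := gordan r vv hvv
  -- the rational functional
  let ydual : (Fin r → ℚ) →ₗ[ℚ] ℚ :=
    { toFun := fun x => ∑ j, x j * y j
      map_add' := by
        intro x1 x2
        rw [← Finset.sum_add_distrib]
        apply Finset.sum_congr rfl
        intro j _
        rw [Pi.add_apply, add_mul]
      map_smul' := by
        intro t x
        show ∑ j, (t • x) j * y j = t • ∑ j, x j * y j
        rw [smul_eq_mul, Finset.mul_sum]
        apply Finset.sum_congr rfl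
        intro j _
        rw [Pi.smul_apply, smul_eq_mul, mul_assoc] }
  let Φ : (ι → ℚ) →ₗ[ℚ] ℚ := ydual ∘ₗ (b.equivFun : Q ≃ₗ[ℚ] (Fin r → ℚ)).toLinearMap ∘ₗ W.mkQ
  have hΦW : ∀ x ∈ W, Φ x = 0 := by
    intro x hx
    show ydual (b.equivFun (W.mkQ x)) = 0
    have : W.mkQ x = 0 := by
      rw [Submodule.mkQ_apply]
      exact (Submodule.Quotient.mk_eq_zero W).mpr hx
    rw [this, map_zero, map_zero]
  -- weights
  let w : ι → ℚ := fun i => Φ (E i)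
  have hwpos : ∀ i : ι, (i.1 : M) ≠ 0 → 0 < w i := by
    intro i hi
    exact hy ⟨i, hi⟩
  have hwzero : ∀ i : ι, (i.1 : M) = 0 → w i = 0 := by
    intro i hi
    apply hΦW
    have hEint : (fun j => if i = j then (1:ℤ) else 0) ∈ D := by
      rw [hmemD]
      have h1 : pos (fun j => if i = j then (1:ℤ) else 0) = fun j => if i = j then 1 else 0 := by
        funext j; simp only [pos]; split <;> rfl
      have h2 : neg (fun j => if i = j then (1:ℤ) else 0) = 0 := by
        funext j; simp only [neg]; split <;> rfl
      rw [h1, h2, map_zero, hπ]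
      rw [Finset.sum_eq_single i]
      · simp [hi]
      · intro i' _ hne
        simp [hne.symm]
      · intro h; exact absurd (mem_univ i) h
    have := hcastQ_mem _ hEint
    have hcast : castQ (fun j => if i = j then (1:ℤ) else 0) = E i := by
      funext j
      simp only [castQ, E]
      split <;> simp
    rwa [hcast] at this
  have hwnonneg : ∀ i : ι, 0 ≤ w i := by
    intro i
    by_cases hi : (i.1 : M) = 0
    · rw [hwzero i hi]
    · exact le_of_lt (hwpos i hi)
  -- expansion of Φ on cast vectors
  have hΦexp : ∀ aN : ι → ℕ, Φ (fun i => (aN i : ℚ)) = ∑ i, (aN i : ℚ) * w i := by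
    intro aN
    have hdecomp : (fun i => (aN i : ℚ)) = ∑ i : ι, (aN i : ℚ) • E i := by
      have := pi_eq_sum_univ (fun i => (aN i : ℚ))
      convert this using 2
    rw [hdecomp, map_sum]
    apply Finset.sum_congr rfl
    intro i _
    rw [map_smul, smul_eq_mul]
  -- clearing denominators in the weights
  set K : ℕ := ∏ i : ι, (w i).den with hK
  have hKpos : 0 < K := Finset.prod_pos (fun _ _ => Rat.den_pos _)
  have hKdvd : ∀ i : ι, (w i).den ∣ K := fun i => Finset.dvd_prod_of_mem _ (mem_univ i)
  choose zW hzW using fun i : ι => exists_int_cast_eq (w i) K (hKdvd i)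
  have hzW_nonneg : ∀ i, 0 ≤ zW i := by
    intro i
    have : (0:ℚ) ≤ (zW i : ℚ) := by
      rw [hzW i]
      exact mul_nonneg (by positivity) (hwnonneg i)
    exact_mod_cast this
  let Wnat : ι → ℕ := fun i => (zW i).toNat
  have hWnat_cast : ∀ i, (Wnat i : ℚ) = (K:ℚ) * w i := by
    intro i
    rw [← hzW i]
    have : ((zW i).toNat : ℤ) = zW i := Int.toNat_of_nonneg (hzW_nonneg i)
    exact_mod_cast congrArg (fun z : ℤ => (z : ℚ)) this
  have hWnat_pos : ∀ i : ι, (i.1 : M) ≠ 0 → 0 < Wnat i := by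
    intro i hi
    have h : (0:ℚ) < (K:ℚ) * w i := mul_pos (by positivity) (hwpos i hi)
    rw [← hWnat_cast i] at h
    exact_mod_cast h
  -- the composite ℕ-valued functional on ℕ-vectors
  let F0 : (ι → ℕ) → ℕ := fun aN => ∑ i, aN i * Wnat i
  have hQeq : ∀ aN : ι → ℕ, ((F0 aN : ℚ)) = (K:ℚ) * Φ (fun i => (aN i : ℚ)) := by
    intro aN
    rw [hΦexp, Finset.mul_sum]
    show ((∑ i, aN i * Wnat i : ℕ) : ℚ) = _
    push_cast
    apply Finset.sum_congr rfl
    intro i _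
    rw [hWnat_cast i]
    ring
  have hcompat : ∀ aN bN : ι → ℕ, π aN = π bN → F0 aN = F0 bN := by
    intro aN bN h
    have hd := hdiff aN bN h
    have hWmem := hcastQ_mem _ hd
    have hsplit : castQ (fun i => (aN i : ℤ) - bN i)
        = (fun i => (aN i : ℚ)) - (fun i => (bN i : ℚ)) := by
      funext i
      simp only [castQ, Pi.sub_apply]
      push_cast
      ring
    have hΦ0 : Φ (fun i => (aN i : ℚ)) = Φ (fun i => (bN i : ℚ)) := by
      have h0 := hΦW _ hWmem
      rw [hsplit, map_sub] at h0
      linarith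
    have : (F0 aN : ℚ) = (F0 bN : ℚ) := by rw [hQeq, hQeq, hΦ0]
    exact_mod_cast this
  -- assemble the homomorphism
  have hσ : ∀ x : M, π (Function.surjInv hπsurj x) = x := fun x => Function.surjInv_eq hπsurj x
  refine ⟨{ toFun := fun x => F0 (Function.surjInv hπsurj x)
            map_zero' := ?_
            map_add' := ?_ }, ?_⟩
  · show F0 (Function.surjInv hπsurj 0) = 0
    rw [hcompat _ 0 (by rw [hσ, map_zero])]
    simp [F0]
  · intro x1 x2
    show F0 (Function.surjInv hπsurj (x1 + x2))
      = F0 (Function.surjInv hπsurj x1) + F0 (Function.surjInv hπsurj x2)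
    rw [hcompat (Function.surjInv hπsurj (x1 + x2))
        (Function.surjInv hπsurj x1 + Function.surjInv hπsurj x2)
        (by rw [hσ, map_add, hσ, hσ])]
    show F0 _ = F0 _ + F0 _
    simp only [F0, Pi.add_apply, add_mul]
    rw [Finset.sum_add_distrib]
  · intro mm hmm
    show 0 < F0 (Function.surjInv hπsurj mm)
    set aN := Function.surjInv hπsurj mm with haN
    have hπa : π aN = mm := hσ mm
    have hex : ∃ i : ι, aN i ≠ 0 ∧ (i.1 : M) ≠ 0 := by
      by_contra hcon
      push_neg at hcon
      apply hmm
      rw [← hπa, hπ]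
      apply Finset.sum_eq_zero
      intro i _
      by_cases h : aN i = 0
      · rw [h, zero_nsmul]
      · rw [hcon i h, nsmul_zero]
    obtain ⟨i, hai, hmi⟩ := hex
    have h1 : 0 < aN i * Wnat i := Nat.mul_pos (Nat.pos_of_ne_zero hai) (hWnat_pos i hmi)
    calc 0 < aN i * Wnat i := h1
      _ ≤ F0 aN := Finset.single_le_sum (f := fun j => aN j * Wnat j)
            (fun j _ => Nat.zero_le _) (mem_univ i)
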